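/- Let G be a connected coloured graph and S a sequence of flooding moves that links vertices u and v (places them in a common monochromatic component). Then there exists a u-v path P in G that is critical with respect to S: for every pair of vertices x, y on P, the sequence S does not link x and y in G strictly before x and y become linked along P (i.e. before the subpath of P between x and y is monochromatic). -/

import Mathlib

namespace Flood

variable {V C : Type*}

/-- Two vertices are joined by an edge inside a monochromatic class. -/
def monoAdj (G : SimpleGraph V) (ω : V → C) (a b : V) : Prop :=
  G.Adj a b ∧ ω a = ω b

/-- `u` and `v` lie in a common monochromatic component of the colouring `ω`. -/
def monoLinked (G : SimpleGraph V) (ω : V → C) (u v : V) : Prop :=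
  Relation.ReflTransGen (monoAdj G ω) u v

/-- One flooding move: recolour the monochromatic component of `v` with colour `d`. -/
noncomputable def floodMove (G : SimpleGraph V) (ω : V → C) (v : V) (d : C) : V → C :=
  fun u => @ite _ (monoLinked G ω v u) (Classical.propDecidable _) d (ω u)

/-- Apply a sequence of flooding moves. -/
noncomputable def floodSeq (G : SimpleGraph V) (ω : V → C) (S : List (V × C)) : V → C :=
  S.foldl (fun ω' m => floodMove G ω' m.1 m.2) ω

/-- The sequence `S` floods `G`, i.e. makes it monochromatic. -/
def Floods (G : SimpleGraph V) (ω : V → C) (S : List (V × C)) : Prop :=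
  ∀ a b, floodSeq G ω S a = floodSeq G ω S b

/-- Minimum number of moves needed to make `G` monochromatic. -/
noncomputable def floodCost (G : SimpleGraph V) (ω : V → C) : ℕ :=
  sInf {k | ∃ S, S.length = k ∧ Floods G ω S}

/-- Minimum number of moves needed to make `G` monochromatic in colour `d`. -/
noncomputable def floodCostIn (G : SimpleGraph V) (ω : V → C) (d : C) : ℕ :=
  sInf {k | ∃ S, S.length = k ∧ ∀ a, floodSeq G ω S a = d}

/-- The sequence `S` links `u` and `v`. -/
def Links (G : SimpleGraph V) (ω : V → C) (S : List (V × C)) (u v : V) : Prop :=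
  monoLinked G (floodSeq G ω S) u v

/-- Minimum number of moves needed to link `u` and `v`. -/
noncomputable def linkCost (G : SimpleGraph V) (ω : V → C) (u v : V) : ℕ :=
  sInf {k | ∃ S, S.length = k ∧ Links G ω S u v}

/-- Minimum number of moves needed to link `u` and `v` in a monochromatic
component of colour `d`. -/
noncomputable def linkCostIn (G : SimpleGraph V) (ω : V → C) (u v : V) (d : C) : ℕ :=
  sInf {k | ∃ S, S.length = k ∧ Links G ω S u v ∧ floodSeq G ω S u = d}


/-- `x` and `y` are linked along the given edge set: they are joined by a
monochromatic chain using only those edges. -/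
def monoLinkedAlong (edges : List (Sym2 V)) (ω : V → C) (x y : V) : Prop :=
  Relation.ReflTransGen (fun a b => s(a, b) ∈ edges ∧ ω a = ω b) x y

/-- A walk `P` is critical with respect to a move sequence `S`: at no point of
the play are two vertices of `P` linked in `G` without being linked along `P`. -/
def Critical (G : SimpleGraph V) (ω : V → C) (S : List (V × C))
    {u v : V} (P : G.Walk u v) : Prop :=
  ∀ x ∈ P.support, ∀ y ∈ P.support, ∀ k : ℕ,
    monoLinked G (floodSeq G ω (S.take k)) x y →
      monoLinkedAlong P.edges (floodSeq G ω (S.take k)) x y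

end Flood

open Flood

section CriticalAux

open Flood Relation SimpleGraph

variable {V C : Type*} {G : SimpleGraph V} {ω : V → C} {S : List (V × C)}

lemma monoAdj_symm' {a b : V} (h : monoAdj G ω a b) : monoAdj G ω b a :=
  ⟨h.1.symm, h.2.symm⟩

lemma monoLinked_symm' {a b : V} (h : monoLinked G ω a b) : monoLinked G ω b a :=
  @Std.Symm.symm _ _ (@Relation.ReflTransGen.stdSymm _ _ ⟨fun _ _ hh => monoAdj_symm' hh⟩) _ _ h

lemma monoLinkedAlong_symm' {E : List (Sym2 V)} {a b : V}
    (h : monoLinkedAlong E ω a b) : monoLinkedAlong E ω b a :=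
  @Std.Symm.symm _ _ (@Relation.ReflTransGen.stdSymm _ _
    ⟨fun x y hh => ⟨by rw [Sym2.eq_swap]; exact hh.1, hh.2.symm⟩⟩) _ _ h

lemma monoLinked_colour {a b : V} (h : monoLinked G ω a b) : ω a = ω b := by
  induction h with
  | refl => rfl
  | tail _ h ih => exact ih.trans h.2

lemma monoAdj_floodMove {a b w : V} {d : C} (h : monoAdj G ω a b) :
    monoAdj G (floodMove G ω w d) a b := by
  refine ⟨h.1, ?_⟩
  by_cases hw : monoLinked G ω w a
  · have hwb : monoLinked G ω w b := hw.tail h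
    simp only [floodMove]
    rw [if_pos hw, if_pos hwb]
  · have hwb : ¬ monoLinked G ω w b := fun hb => hw (hb.tail (monoAdj_symm' h))
    simp only [floodMove]
    rw [if_neg hw, if_neg hwb]
    exact h.2

lemma monoLinked_floodMove {a b w : V} {d : C} (h : monoLinked G ω a b) :
    monoLinked G (floodMove G ω w d) a b :=
  Relation.ReflTransGen.mono (fun _ _ hh => monoAdj_floodMove hh) _ _ h

lemma floodSeq_append (G : SimpleGraph V) (ω : V → C) (L₁ L₂ : List (V × C)) :
    floodSeq G ω (L₁ ++ L₂) = floodSeq G (floodSeq G ω L₁) L₂ :=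
  List.foldl_append

lemma monoLinked_take_le {a b : V} {j k : ℕ} (hjk : j ≤ k)
    (h : monoLinked G (floodSeq G ω (S.take j)) a b) :
    monoLinked G (floodSeq G ω (S.take k)) a b := by
  induction k, hjk using Nat.le_induction with
  | base => exact h
  | succ k hk ih =>
    have hts : S.take (k + 1) = S.take k ++ (S[k]?).toList := List.take_succ
    rw [hts, floodSeq_append]
    cases hm : S[k]? with
    | none => exact ih
    | some m => exact monoLinked_floodMove ih

/-- first time `x` and `y` are linked (capped at `S.length + 1`). -/
noncomputable def tauF (G : SimpleGraph V) (ω : V → C) (S : List (V × C)) (x y : V) : ℕ :=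
  sInf {k | monoLinked G (floodSeq G ω (S.take k)) x y ∨ k = S.length + 1}

lemma tauF_symm (G : SimpleGraph V) (ω : V → C) (S : List (V × C)) (x y : V) :
    tauF G ω S x y = tauF G ω S y x := by
  unfold tauF
  congr 1
  ext k
  exact or_congr ⟨monoLinked_symm', monoLinked_symm'⟩ Iff.rfl

/-- `tauF` as a function on unordered pairs. -/
noncomputable def tau2 (G : SimpleGraph V) (ω : V → C) (S : List (V × C)) : Sym2 V → ℕ :=
  Sym2.lift ⟨tauF G ω S, fun a b => tauF_symm G ω S a b⟩

lemma tau2_mk (G : SimpleGraph V) (ω : V → C) (S : List (V × C)) (a b : V) :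
    tau2 G ω S s(a, b) = tauF G ω S a b := rfl

/-- the multiset of first-link times of the edges of a walk. -/
noncomputable def muW (G : SimpleGraph V) (ω : V → C) (S : List (V × C)) {a b : V}
    (P : G.Walk a b) : Multiset ℕ :=
  ↑(P.edges.map (tau2 G ω S))

lemma tauF_le {x y : V} {k : ℕ} (h : monoLinked G (floodSeq G ω (S.take k)) x y) :
    tauF G ω S x y ≤ k :=
  Nat.sInf_le (Or.inl h)

lemma linked_of_tauF_le {x y : V} {k : ℕ} (h : tauF G ω S x y ≤ k) (hk : k ≤ S.length) :
    monoLinked G (floodSeq G ω (S.take k)) x y := by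
  have hne : {n | monoLinked G (floodSeq G ω (S.take n)) x y ∨ n = S.length + 1}.Nonempty :=
    ⟨S.length + 1, Or.inr rfl⟩
  have hmem := Nat.sInf_mem hne
  rcases hmem with hl | he
  · exact monoLinked_take_le h hl
  · exfalso
    have : tauF G ω S x y = S.length + 1 := he
    omega

lemma exists_mono_walk {ω' : V → C} {x y : V} (h : monoLinked G ω' x y) :
    ∃ Q : G.Walk x y, ∀ z ∈ Q.support, ω' z = ω' x := by
  induction h with
  | refl => exact ⟨SimpleGraph.Walk.nil, by simp⟩
  | @tail b c hxb hbc ih =>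
    obtain ⟨Q, hQ⟩ := ih
    refine ⟨Q.concat hbc.1, ?_⟩
    intro z hz
    rw [SimpleGraph.Walk.support_concat, List.mem_append] at hz
    rcases hz with hz | hz
    · exact hQ z hz
    · have hzc : z = c := by simpa using hz
      subst hzc
      exact (hbc.2.symm).trans (hQ b Q.end_mem_support)

lemma tau2_le_of_mono_walk {k : ℕ} {x y : V} (Q : G.Walk x y)
    (hQ : ∀ z ∈ Q.support, ∀ w ∈ Q.support,
      floodSeq G ω (S.take k) z = floodSeq G ω (S.take k) w) :
    ∀ e ∈ Q.edges, tau2 G ω S e ≤ k := by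
  induction Q with
  | nil => simp
  | @cons a b c hab Q ih =>
    intro e he
    rw [SimpleGraph.Walk.edges_cons, List.mem_cons] at he
    rcases he with rfl | he
    · have hl : monoLinked G (floodSeq G ω (S.take k)) a b :=
        Relation.ReflTransGen.single ⟨hab, hQ a (by simp) b (by simp)⟩
      rw [tau2_mk]
      exact tauF_le hl
    · exact ih (fun z hz w hw => hQ z (by simp [hz]) w (by simp [hw])) e he

lemma along_of_tau2_le {k : ℕ} (hk : k ≤ S.length) {x y : V} (M : G.Walk x y)
    (E : List (Sym2 V)) (hsub : ∀ e ∈ M.edges, e ∈ E)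
    (hτ : ∀ e ∈ M.edges, tau2 G ω S e ≤ k) :
    monoLinkedAlong E (floodSeq G ω (S.take k)) x y := by
  induction M with
  | nil => exact Relation.ReflTransGen.refl
  | @cons a b c hab M ih =>
    have hhead : s(a, b) ∈ E := hsub _ (by simp)
    have ht : tauF G ω S a b ≤ k := by
      have h1 := hτ s(a, b) (by simp)
      rwa [tau2_mk] at h1
    have hcol := monoLinked_colour (linked_of_tauF_le ht hk)
    exact Relation.ReflTransGen.head ⟨hhead, hcol⟩
      (ih (fun e he => hsub e (by simp [he])) (fun e he => hτ e (by simp [he])))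

lemma rtg_remove (Y D : Multiset ℕ) :
    Relation.ReflTransGen (Relation.CutExpand ((· < ·) : ℕ → ℕ → Prop)) Y (Y + D) := by
  induction D using Multiset.induction with
  | empty => simpa using Relation.ReflTransGen.refl
  | cons a D ih =>
    refine Relation.ReflTransGen.tail ih ?_
    refine ⟨0, a, by simp, ?_⟩
    rw [add_zero, ← Multiset.singleton_add]
    abel

lemma dm_step (X Q : Multiset ℕ) (a : ℕ) (D : Multiset ℕ) (hQ : ∀ b ∈ Q, b < a) :
    Relation.TransGen (Relation.CutExpand ((· < ·) : ℕ → ℕ → Prop))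
      (X + Q) (X + (a ::ₘ D)) := by
  have step : Relation.CutExpand ((· < ·) : ℕ → ℕ → Prop) ((X + Q) + D) (X + (a ::ₘ D)) := by
    refine ⟨Q, a, hQ, ?_⟩
    rw [← Multiset.singleton_add]
    abel
  exact Relation.TransGen.tail' (rtg_remove _ _) step

lemma dm_remove (X : Multiset ℕ) (a : ℕ) (D : Multiset ℕ) :
    Relation.TransGen (Relation.CutExpand ((· < ·) : ℕ → ℕ → Prop))
      X (X + (a ::ₘ D)) := by
  simpa using dm_step X 0 a D (by simp)

end CriticalAux


/-- if a sequence of moves links `u` and `v` in a connected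
coloured graph, then there is a critical `u`-`v` path with respect to it. -/
theorem exists_critical_path {V C : Type*}
    (G : SimpleGraph V) (hG : G.Connected) (ω : V → C)
    (u v : V) (S : List (V × C)) (hS : Links G ω S u v) :
    ∃ P : G.Walk u v, P.IsPath ∧ Critical G ω S P := by
  classical
  -- pick a walk from `u` to `v` whose multiset of edge link-times is minimal
  have hwf : WellFounded (Relation.TransGen (Relation.CutExpand ((· < ·) : ℕ → ℕ → Prop))) :=
    (WellFounded.cutExpand wellFounded_lt).transGen
  have hne : (Set.range (fun P : G.Walk u v => muW G ω S P)).Nonempty := by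
    obtain ⟨P⟩ := hG.preconnected u v
    exact ⟨_, ⟨P, rfl⟩⟩
  obtain ⟨m, hmem, hmin0⟩ := hwf.has_min _ hne
  obtain ⟨P, rfl⟩ := hmem
  have hmin : ∀ P' : G.Walk u v,
      ¬ Relation.TransGen (Relation.CutExpand ((· < ·) : ℕ → ℕ → Prop))
        (muW G ω S P') (muW G ω S P) := fun P' h => hmin0 _ ⟨P', rfl⟩ h
  -- the key exchange argument
  have key : ∀ (x y : V) (A : G.Walk u x) (M : G.Walk x y) (B : G.Walk y v),
      P = A.append (M.append B) → ∀ k, k ≤ S.length →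
      monoLinked G (floodSeq G ω (S.take k)) x y →
      monoLinkedAlong P.edges (floodSeq G ω (S.take k)) x y := by
    intro x y A M B hdec k hk hlink
    by_contra hno
    have hPedges : P.edges = A.edges ++ (M.edges ++ B.edges) := by
      rw [hdec, SimpleGraph.Walk.edges_append, SimpleGraph.Walk.edges_append]
    have hsubM : ∀ e ∈ M.edges, e ∈ P.edges := by
      intro e he; rw [hPedges]; simp [he]
    have hex : ¬ ∀ e ∈ M.edges, tau2 G ω S e ≤ k := fun hall =>
      hno (along_of_tau2_le hk M P.edges hsubM hall)
    push_neg at hex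
    obtain ⟨e₀, he₀M, he₀⟩ := hex
    obtain ⟨Q, hQ⟩ := exists_mono_walk hlink
    have hQ2 : ∀ z ∈ Q.support, ∀ w ∈ Q.support,
        floodSeq G ω (S.take k) z = floodSeq G ω (S.take k) w :=
      fun z hz w hw => (hQ z hz).trans (hQ w hw).symm
    have hQτ := tau2_le_of_mono_walk Q hQ2
    have hmem0 : tau2 G ω S e₀ ∈ (↑(M.edges.map (tau2 G ω S)) : Multiset ℕ) := by
      simp only [Multiset.mem_coe, List.mem_map]
      exact ⟨e₀, he₀M, rfl⟩
    obtain ⟨D, hD⟩ := Multiset.exists_cons_of_mem hmem0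
    have hmuP : muW G ω S P
        = ((↑(A.edges.map (tau2 G ω S)) : Multiset ℕ) + ↑(B.edges.map (tau2 G ω S)))
          + (tau2 G ω S e₀ ::ₘ D) := by
      unfold muW
      rw [hPedges, List.map_append, List.map_append, ← Multiset.coe_add, ← Multiset.coe_add,
        hD, ← Multiset.singleton_add]
      abel
    have hmuP' : muW G ω S (A.append (Q.append B))
        = ((↑(A.edges.map (tau2 G ω S)) : Multiset ℕ) + ↑(B.edges.map (tau2 G ω S)))
          + ↑(Q.edges.map (tau2 G ω S)) := by
      unfold muW
      rw [SimpleGraph.Walk.edges_append, SimpleGraph.Walk.edges_append,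
        List.map_append, List.map_append, ← Multiset.coe_add, ← Multiset.coe_add]
      abel
    apply hmin (A.append (Q.append B))
    rw [hmuP, hmuP']
    apply dm_step
    intro b hb
    rw [Multiset.mem_coe, List.mem_map] at hb
    obtain ⟨e, he, rfl⟩ := hb
    exact lt_of_le_of_lt (hQτ e he) he₀
  -- the minimal walk is a path
  have hpath : P.IsPath := by
    rw [SimpleGraph.Walk.isPath_def]
    by_contra hnd
    obtain ⟨w, hw2⟩ : ∃ w, 2 ≤ P.support.count w := by
      by_contra hall
      push_neg at hall
      exact hnd (List.nodup_iff_count_le_one.mpr fun a => by have := hall a; omega)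
    have hw : w ∈ P.support := by
      rw [← List.count_pos_iff]
      omega
    have hspec := SimpleGraph.Walk.take_spec P hw
    have hA1 : (P.takeUntil w hw).support.count w = 1 :=
      SimpleGraph.Walk.count_support_takeUntil_eq_one P hw
    have hcount : P.support.count w
        = (P.takeUntil w hw).support.count w + (P.dropUntil w hw).support.tail.count w := by
      conv_lhs => rw [← hspec]
      rw [SimpleGraph.Walk.support_append, List.count_append]
    have hwd : w ∈ (P.dropUntil w hw).support.tail := by
      rw [← List.count_pos_iff]
      omega
    have hlen : 0 < (P.dropUntil w hw).length := by
      rcases Nat.eq_zero_or_pos (P.dropUntil w hw).length with h0 | h0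
      · exfalso
        apply List.ne_nil_of_mem hwd
        have h1 := SimpleGraph.Walk.length_support (P.dropUntil w hw)
        have h2 : (P.dropUntil w hw).support.tail.length = 0 := by
          rw [List.length_tail, h1, h0]
        exact List.length_eq_zero_iff.mp h2
      · exact h0
    obtain ⟨w', hadj, d₂, hd2⟩ := SimpleGraph.Walk.not_nil_iff.mp
      (by rw [SimpleGraph.Walk.not_nil_iff_lt_length]; exact hlen)
    have hw2' : w ∈ d₂.support := by
      have h3 := hwd
      rw [hd2] at h3
      simpa using h3
    have hspec2 := SimpleGraph.Walk.take_spec d₂ hw2'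
    have hd₂e : d₂.edges = (d₂.takeUntil w hw2').edges ++ (d₂.dropUntil w hw2').edges := by
      conv_lhs => rw [← hspec2]
      rw [SimpleGraph.Walk.edges_append]
    have hPe : P.edges = (P.takeUntil w hw).edges
        ++ (s(w, w') :: ((d₂.takeUntil w hw2').edges ++ (d₂.dropUntil w hw2').edges)) := by
      conv_lhs => rw [← hspec]
      rw [SimpleGraph.Walk.edges_append, hd2, SimpleGraph.Walk.edges_cons, hd₂e]
    have hmuP : muW G ω S P
        = ((↑((P.takeUntil w hw).edges.map (tau2 G ω S)) : Multiset ℕ)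
            + ↑((d₂.dropUntil w hw2').edges.map (tau2 G ω S)))
          + (tau2 G ω S s(w, w') ::ₘ ↑((d₂.takeUntil w hw2').edges.map (tau2 G ω S))) := by
      unfold muW
      rw [hPe, List.map_append, List.map_cons, List.map_append, ← Multiset.coe_add,
        ← Multiset.cons_coe, ← Multiset.coe_add, ← Multiset.singleton_add]
      rw [← Multiset.singleton_add]
      abel
    have hmuP'' : muW G ω S ((P.takeUntil w hw).append (d₂.dropUntil w hw2'))
        = (↑((P.takeUntil w hw).edges.map (tau2 G ω S)) : Multiset ℕ)
            + ↑((d₂.dropUntil w hw2').edges.map (tau2 G ω S)) := by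
      unfold muW
      rw [SimpleGraph.Walk.edges_append, List.map_append, ← Multiset.coe_add]
    apply hmin ((P.takeUntil w hw).append (d₂.dropUntil w hw2'))
    rw [hmuP, hmuP'']
    apply dm_remove
  refine ⟨P, hpath, ?_⟩
  intro x hx y hy k hlink
  have hkk : S.take k = S.take (min k S.length) := by
    rcases le_total k S.length with h | h
    · rw [min_eq_left h]
    · rw [min_eq_right h, List.take_of_length_le h, List.take_length]
  rw [hkk] at hlink ⊢
  have hk' : min k S.length ≤ S.length := min_le_right _ _
  have hy' : y ∈ ((P.takeUntil x hx).append (P.dropUntil x hx)).support := by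
    rw [SimpleGraph.Walk.take_spec P hx]; exact hy
  rcases (SimpleGraph.Walk.mem_support_append_iff _ _).mp hy' with hyA | hyd
  · -- y occurs before x
    apply monoLinkedAlong_symm'
    apply key y x ((P.takeUntil x hx).takeUntil y hyA)
      ((P.takeUntil x hx).dropUntil y hyA) (P.dropUntil x hx) ?_ _ hk'
      (monoLinked_symm' hlink)
    rw [SimpleGraph.Walk.append_assoc, SimpleGraph.Walk.take_spec (P.takeUntil x hx) hyA,
      SimpleGraph.Walk.take_spec P hx]
  · -- x occurs before y
    apply key x y (P.takeUntil x hx) ((P.dropUntil x hx).takeUntil y hyd)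
      ((P.dropUntil x hx).dropUntil y hyd) ?_ _ hk' hlink
    rw [SimpleGraph.Walk.take_spec (P.dropUntil x hx) hyd, SimpleGraph.Walk.take_spec P hx]
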